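/- Modal characterisation: two states s and t of a labelled transition system are divergence-preserving branching bisimilar if and only if s and t satisfy exactly the same formulas of the modal logic Φ whose formulas are generated by negation ¬φ, conjunction ⋀Φ' over sets Φ' of formulas, the binary just-before modality φ⟨a⟩ψ for each action a in Act_τ, and the unary divergence modality Δφ. -/

import Mathlib

/-- The internal-step relation: `s →τ s'`. -/
def TauStep {S Act : Type*} (tr : S → Act → S → Prop) (τ : Act) : S → S → Prop :=
  fun x y => tr x τ y

/-- `⇒` : the reflexive-transitive closure of `→τ`. -/
def TauReach {S Act : Type*} (tr : S → Act → S → Prop) (τ : Act) : S → S → Prop :=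
  Relation.ReflTransGen (TauStep tr τ)

/-- `→τ⁺` : the transitive closure of `→τ`. -/
def TauPlus {S Act : Type*} (tr : S → Act → S → Prop) (τ : Act) : S → S → Prop :=
  Relation.TransGen (TauStep tr τ)

/-- `s →(a)̂ s'` : either `s →a s'`, or `a = τ` and `s = s'`. -/
def OptStep {S Act : Type*} (tr : S → Act → S → Prop) (τ : Act)
    (s : S) (a : Act) (s' : S) : Prop :=
  tr s a s' ∨ (a = τ ∧ s = s')

/-- Condition (T) of branching bisimulations. -/
def CondT {S Act : Type*} (tr : S → Act → S → Prop) (τ : Act) (B : S → S → Prop) : Prop :=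
  ∀ s t a s', B s t → tr s a s' →
    ∃ t'' t', TauReach tr τ t t'' ∧ OptStep tr τ t'' a t' ∧ B s t'' ∧ B s' t'

/-- A branching bisimulation: a symmetric relation satisfying condition (T). -/
def IsBranchingBisim {S Act : Type*} (tr : S → Act → S → Prop) (τ : Act)
    (B : S → S → Prop) : Prop :=
  Symmetric B ∧ CondT tr τ B

/-- The divergence condition (D). -/
def CondD {S Act : Type*} (tr : S → Act → S → Prop) (τ : Act) (B : S → S → Prop) : Prop :=
  ∀ s t (sk : ℕ → S), B s t → sk 0 = s → (∀ k, tr (sk k) τ (sk (k + 1))) →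
    (∀ k, B (sk k) t) → ∃ t', TauPlus tr τ t t' ∧ ∃ k, B (sk k) t'

/-- A divergence-preserving branching bisimulation. -/
def IsDPBB {S Act : Type*} (tr : S → Act → S → Prop) (τ : Act) (B : S → S → Prop) : Prop :=
  IsBranchingBisim tr τ B ∧ CondD tr τ B

/-- Divergence-preserving branching bisimilarity `s ⇔Δ t`. -/
def DPBBisimilar {S Act : Type*} (tr : S → Act → S → Prop) (τ : Act) (s t : S) : Prop :=
  ∃ B, IsDPBB tr τ B ∧ B s t

/-- A state is divergent if it admits an infinite sequence of τ-transitions. -/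
def Divergent {S Act : Type*} (tr : S → Act → S → Prop) (τ : Act) (s : S) : Prop :=
  ∃ sk : ℕ → S, sk 0 = s ∧ ∀ k, tr (sk k) τ (sk (k + 1))

/-- Formulas of the modal logic: negation, (arbitrary set-indexed) conjunction, the
binary just-before modality ⟨a⟩, and the divergence modality Δ. -/
inductive Formula (Act : Type) : Type 1 where
  | neg : Formula Act → Formula Act
  | conj : (ι : Type) → (ι → Formula Act) → Formula Act
  | jb : Formula Act → Act → Formula Act → Formula Act
  | div : Formula Act → Formula Act

/-- The satisfaction relation. -/
def Sat {S Act : Type} (tr : S → Act → S → Prop) (τ : Act) : S → Formula Act → Prop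
  | s, .neg φ => ¬ Sat tr τ s φ
  | s, .conj ι f => ∀ i : ι, Sat tr τ s (f i)
  | s, .jb φ a ψ => ∃ s'' s', TauReach tr τ s s'' ∧ OptStep tr τ s'' a s' ∧
      Sat tr τ s'' φ ∧ Sat tr τ s' ψ
  | s, .div φ => ∃ u : ℕ → S, TauReach tr τ s (u 0) ∧
      (∀ k, tr (u k) τ (u (k + 1))) ∧ (∀ k, Sat tr τ (u k) φ)


/-! ### Auxiliary machinery for the modal characterisation -/

attribute [local instance] Classical.propDecidable

open Relation

section Aux

variable {S Act : Type} {tr : S → Act → S → Prop} {τ : Act}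

lemma tauReach_plus_or_eq {t x : S} (h : TauReach tr τ t x) :
    TauPlus tr τ t x ∨ x = t := by
  rcases h.cases_head with h | ⟨c, hc, hcr⟩
  · exact Or.inr h.symm
  · exact Or.inl (TransGen.head' hc hcr)

lemma optStep_tau_reach {x y : S} (h : OptStep tr τ x τ y) : TauReach tr τ x y := by
  rcases h with h | ⟨_, h⟩
  · exact ReflTransGen.single h
  · exact h ▸ ReflTransGen.refl

lemma reach_opt_plus_or_eq {t t'' t' : S} (h1 : TauReach tr τ t t'')
    (h2 : OptStep tr τ t'' τ t') : TauPlus tr τ t t' ∨ t' = t := by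
  rcases h2 with h | ⟨_, h⟩
  · exact Or.inl (TransGen.tail' h1 h)
  · exact h ▸ tauReach_plus_or_eq h1

lemma bisim_symm : Symmetric (DPBBisimilar tr τ) :=
  fun _ _ ⟨B, hB, h⟩ => ⟨B, hB, hB.1.1 h⟩

lemma bisim_condT : CondT tr τ (DPBBisimilar tr τ) := by
  rintro s t a s' ⟨B, hB, hst⟩ hstep
  obtain ⟨t'', t', h1, h2, h3, h4⟩ := hB.1.2 s t a s' hst hstep
  exact ⟨t'', t', h1, h2, ⟨B, hB, h3⟩, ⟨B, hB, h4⟩⟩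

lemma bisim_lift {x y x' : S} (hxy : DPBBisimilar tr τ x y) (hx : TauReach tr τ x x') :
    ∃ y', TauReach tr τ y y' ∧ DPBBisimilar tr τ x' y' := by
  induction hx with
  | refl => exact ⟨y, ReflTransGen.refl, hxy⟩
  | tail hab hbc ih =>
    obtain ⟨y1, hr1, hb1⟩ := ih
    obtain ⟨y'', y', h1, h2, _, h4⟩ := bisim_condT _ _ τ _ hb1 hbc
    exact ⟨y', (hr1.trans h1).trans (optStep_tau_reach h2), h4⟩

lemma bisim_condD : CondD tr τ (DPBBisimilar tr τ) := by
  intro s t sk hst h0 hstep hall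
  by_contra hno
  push_neg at hno
  obtain ⟨B, hB, hBst⟩ := hst
  have key : ∀ k, B (sk k) t := by
    intro k
    induction k with
    | zero => rw [h0]; exact hBst
    | succ n ih =>
      obtain ⟨t'', t', h1, h2, _, h4⟩ := hB.1.2 _ _ _ _ ih (hstep n)
      rcases reach_opt_plus_or_eq h1 h2 with hp | he
      · exact absurd ⟨B, hB, h4⟩ (hno t' hp (n + 1))
      · exact he ▸ h4
  obtain ⟨t', hp, k, hk⟩ := hB.2 s t sk hBst h0 hstep key
  exact hno t' hp k ⟨B, hB, hk⟩

/-- Stuttering configurations: `m` lies on a `τ`-path between two states bisimilar to `a`. -/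
def Stu (tr : S → Act → S → Prop) (τ : Act) (a m : S) : Prop :=
  ∃ y y'', DPBBisimilar tr τ a y ∧ TauReach tr τ y m ∧ TauReach tr τ m y'' ∧
    DPBBisimilar tr τ a y''

/-- The stuttering lemma for divergence-preserving branching bisimilarity. -/
lemma stutter {a y m y'' : S} (h1 : DPBBisimilar tr τ a y) (h2 : TauReach tr τ y m)
    (h3 : TauReach tr τ m y'') (h4 : DPBBisimilar tr τ a y'') :
    DPBBisimilar tr τ a m := by
  refine ⟨fun u v => DPBBisimilar tr τ u v ∨ Stu tr τ u v ∨ Stu tr τ v u,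
    ⟨⟨?_, ?_⟩, ?_⟩, Or.inr (Or.inl ⟨y, y'', h1, h2, h3, h4⟩)⟩
  · rintro u v (h | h | h)
    · exact Or.inl (bisim_symm h)
    · exact Or.inr (Or.inr h)
    · exact Or.inr (Or.inl h)
  · rintro p q α p' (hpq | ⟨z, z'', hz1, hz2, hz3, hz4⟩ | ⟨z, z'', hz1, hz2, hz3, hz4⟩) hstep
    · obtain ⟨q'', q', h5, h6, h7, h8⟩ := bisim_condT _ _ _ _ hpq hstep
      exact ⟨q'', q', h5, h6, Or.inl h7, Or.inl h8⟩
    · obtain ⟨q'', q', h5, h6, h7, h8⟩ := bisim_condT _ _ _ _ hz4 hstep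
      exact ⟨q'', q', hz3.trans h5, h6, Or.inl h7, Or.inl h8⟩
    · obtain ⟨q1, hq1, hb1⟩ := bisim_lift (bisim_symm hz1) hz2
      obtain ⟨q'', q', h5, h6, h7, h8⟩ := bisim_condT _ _ _ _ hb1 hstep
      exact ⟨q'', q', hq1.trans h5, h6, Or.inl h7, Or.inl h8⟩
  · intro p q sk hpq h0 hstep hall
    by_contra hno
    push_neg at hno
    have hred : ∀ k, DPBBisimilar tr τ (sk k) q := by
      intro k
      rcases hall k with h | ⟨z, z'', hz1, hz2, hz3, hz4⟩ | ⟨z, z'', hz1, hz2, hz3, hz4⟩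
      · exact h
      · rcases tauReach_plus_or_eq hz3 with hp | he
        · exact absurd hz4 (hno z'' hp k).1
        · exact he ▸ hz4
      · obtain ⟨q1, hq1, hb1⟩ := bisim_lift (bisim_symm hz1) hz2
        rcases tauReach_plus_or_eq hq1 with hp | he
        · exact absurd hb1 (hno q1 hp k).1
        · exact he ▸ hb1
    obtain ⟨q', hp, k, hk⟩ := bisim_condD p q sk (h0 ▸ hred 0) h0 hstep hred
    exact (hno q' hp k).1 hk

/-- Single-step divergence transfer: if `w` is bisimilar to a state on an infinite
`τ`-sequence, then `w` has a `τ`-successor again bisimilar to a state of the sequence. -/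
lemma singleStep {u : ℕ → S} (hu : ∀ k, tr (u k) τ (u (k + 1))) {w : S} {K : ℕ}
    (hK : DPBBisimilar tr τ (u K) w) :
    ∃ w' K', tr w τ w' ∧ DPBBisimilar tr τ (u K') w' := by
  by_cases hall : ∀ k, DPBBisimilar tr τ (u (K + k)) w
  · obtain ⟨t', hp, j, hj⟩ :=
      bisim_condD (u K) w (fun k => u (K + k)) hK rfl (fun k => hu (K + k)) hall
    obtain ⟨x, hx1, hx2⟩ := TransGen.head'_iff.mp hp
    exact ⟨x, K + j, hx1, stutter (hall j) (ReflTransGen.single hx1) hx2 hj⟩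
  · push_neg at hall
    have hk0 := Nat.find_spec hall
    set k₀ := Nat.find hall with hdef
    have hpos : 0 < k₀ := Nat.pos_of_ne_zero (fun h => hk0 (by simpa [h] using hK))
    have hprev : DPBBisimilar tr τ (u (K + (k₀ - 1))) w :=
      not_not.mp (Nat.find_min hall (Nat.sub_lt hpos Nat.one_pos))
    have hsucc : K + (k₀ - 1) + 1 = K + k₀ := by omega
    obtain ⟨w'', w', h1, h2, h3, h4⟩ := bisim_condT _ _ _ _ hprev (hu (K + (k₀ - 1)))
    rw [hsucc] at h4
    rcases h1.cases_head with he | ⟨x, hx1, hx2⟩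
    · cases he
      rcases h2 with hs | ⟨_, he2⟩
      · exact ⟨w', K + k₀, hs, h4⟩
      · exact absurd (he2 ▸ h4) hk0
    · exact ⟨x, K + (k₀ - 1), hx1, stutter hprev (ReflTransGen.single hx1) hx2 h3⟩

/-- Divergence transfer: an infinite `τ`-run each of whose states is bisimilar to a
state of the given divergent sequence. -/
lemma runLemma {u : ℕ → S} (hu : ∀ k, tr (u k) τ (u (k + 1))) {q0 : S}
    (h0 : DPBBisimilar tr τ (u 0) q0) :
    ∃ v : ℕ → S, v 0 = q0 ∧ (∀ i, tr (v i) τ (v (i + 1))) ∧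
      ∀ i, ∃ k, DPBBisimilar tr τ (u k) (v i) := by
  have hstep : ∀ p : {w : S // ∃ K, DPBBisimilar tr τ (u K) w},
      ∃ p' : {w : S // ∃ K, DPBBisimilar tr τ (u K) w}, tr p.1 τ p'.1 := by
    rintro ⟨w, K, hK⟩
    obtain ⟨w', K', h1, h2⟩ := singleStep hu hK
    exact ⟨⟨w', K', h2⟩, h1⟩
  choose f hf using hstep
  refine ⟨fun n => (f^[n] ⟨q0, 0, h0⟩).1, rfl, fun i => ?_, fun i => (f^[i] ⟨q0, 0, h0⟩).2⟩
  have h : f^[i + 1] ⟨q0, 0, h0⟩ = f (f^[i] ⟨q0, 0, h0⟩) :=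
    Function.iterate_succ_apply' f i _
  show tr (f^[i] ⟨q0, 0, h0⟩).1 τ (f^[i + 1] ⟨q0, 0, h0⟩).1
  rw [h]
  exact hf _

/-- Invariance of satisfaction under divergence-preserving branching bisimilarity. -/
lemma invariance : ∀ (φ : Formula Act) (x y : S), DPBBisimilar tr τ x y →
    (Sat tr τ x φ ↔ Sat tr τ y φ) := by
  intro φ
  induction φ with
  | neg φ ih =>
    intro x y hxy
    simp only [Sat]
    exact not_congr (ih x y hxy)
  | conj ι f ih =>
    intro x y hxy
    simp only [Sat]
    exact forall_congr' fun i => ih i x y hxy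
  | jb φ a ψ ihφ ihψ =>
    have key : ∀ x y, DPBBisimilar tr τ x y →
        Sat tr τ x (.jb φ a ψ) → Sat tr τ y (.jb φ a ψ) := by
      intro x y hxy hx
      simp only [Sat] at hx ⊢
      obtain ⟨s'', s', hre, hopt, hφ, hψ⟩ := hx
      obtain ⟨t0, hre', hb''⟩ := bisim_lift hxy hre
      rcases hopt with hs | ⟨ha, hss⟩
      · obtain ⟨t'', t', h1, h2, h3, h4⟩ := bisim_condT _ _ _ _ hb'' hs
        exact ⟨t'', t', hre'.trans h1, h2, (ihφ _ _ h3).mp hφ, (ihψ _ _ h4).mp hψ⟩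
      · exact ⟨t0, t0, hre', Or.inr ⟨ha, rfl⟩, (ihφ _ _ hb'').mp hφ,
          (ihψ _ _ (hss ▸ hb'')).mp hψ⟩
    exact fun x y hxy => ⟨key x y hxy, key y x (bisim_symm hxy)⟩
  | div φ ih =>
    have key : ∀ x y, DPBBisimilar tr τ x y →
        Sat tr τ x (.div φ) → Sat tr τ y (.div φ) := by
      intro x y hxy hx
      simp only [Sat] at hx ⊢
      obtain ⟨u, hre, hst, hsat⟩ := hx
      obtain ⟨q0, hre', hb0⟩ := bisim_lift hxy hre
      obtain ⟨v, hv0, hvstep, hvrel⟩ := runLemma hst hb0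
      refine ⟨v, by rw [hv0]; exact hre', hvstep, fun i => ?_⟩
      obtain ⟨k, hk⟩ := hvrel i
      exact (ih _ _ hk).mp (hsat k)
    exact fun x y hxy => ⟨key x y hxy, key y x (bisim_symm hxy)⟩

/-- The relation "satisfies exactly the same formulas". -/
def FormEq (tr : S → Act → S → Prop) (τ : Act) (x y : S) : Prop :=
  ∀ φ : Formula Act, Sat tr τ x φ ↔ Sat tr τ y φ

lemma top_sat (x : S) : Sat tr τ x (Formula.conj Empty (fun e => e.elim)) :=
  fun i => i.elim

lemma distinguish {x y : S} (h : ¬ FormEq tr τ x y) :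
    ∃ χ, Sat tr τ x χ ∧ ¬ Sat tr τ y χ := by
  by_contra h2
  push_neg at h2
  apply h
  intro φ
  constructor
  · exact h2 φ
  · intro hy
    by_contra hx
    exact h2 (Formula.neg φ) hx hy

lemma formEq_condT : CondT tr τ (FormEq tr τ) := by
  intro s t a s' hst hstep
  by_contra hno
  push_neg at hno
  have hsel : ∀ i : {p : S × S // TauReach tr τ t p.1 ∧ OptStep tr τ p.1 a p.2},
      ∃ pq : Formula Act × Formula Act,
      (Sat tr τ s pq.1 ∧ Sat tr τ s' pq.2) ∧
        (¬ Sat tr τ i.1.1 pq.1 ∨ ¬ Sat tr τ i.1.2 pq.2) := by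
    rintro ⟨⟨t'', t'⟩, hre, hopt⟩
    by_cases h1 : FormEq tr τ s t''
    · obtain ⟨χ, hχ1, hχ2⟩ := distinguish (hno t'' t' hre hopt h1)
      exact ⟨(Formula.conj Empty fun e => e.elim, χ), ⟨top_sat s, hχ1⟩, Or.inr hχ2⟩
    · obtain ⟨χ, hχ1, hχ2⟩ := distinguish h1
      exact ⟨(χ, Formula.conj Empty fun e => e.elim), ⟨hχ1, top_sat s'⟩, Or.inl hχ2⟩
  choose P hP1 hP2 using hsel
  have hjb : Sat tr τ s (Formula.jb
      (Formula.conj {p : S × S // TauReach tr τ t p.1 ∧ OptStep tr τ p.1 a p.2}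
        fun i => (P i).1) a
      (Formula.conj {p : S × S // TauReach tr τ t p.1 ∧ OptStep tr τ p.1 a p.2}
        fun i => (P i).2)) :=
    ⟨s, s', ReflTransGen.refl, Or.inl hstep, fun i => (hP1 i).1, fun i => (hP1 i).2⟩
  obtain ⟨t'', t', hre, hopt, hΦ, hΨ⟩ := (hst _).mp hjb
  rcases hP2 ⟨(t'', t'), hre, hopt⟩ with hn | hn
  · exact hn (hΦ ⟨(t'', t'), hre, hopt⟩)
  · exact hn (hΨ ⟨(t'', t'), hre, hopt⟩)

lemma formEq_condD : CondD tr τ (FormEq tr τ) := by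
  intro s t sk hst h0 hstep hall
  by_contra hno
  push_neg at hno
  have hsel : ∀ (i : {w : S // TauPlus tr τ t w}) (k : ℕ),
      ∃ χ, Sat tr τ (sk k) χ ∧ ¬ Sat tr τ i.1 χ :=
    fun i k => distinguish (hno i.1 i.2 k)
  choose c hc1 hc2 using hsel
  have hdiv : Sat tr τ s (Formula.div (Formula.conj {w : S // TauPlus tr τ t w}
      fun i => Formula.neg (Formula.conj ℕ fun k => Formula.neg (c i k)))) := by
    refine ⟨sk, by rw [h0]; exact Relation.ReflTransGen.refl, hstep, fun k => ?_⟩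
    intro i hallneg
    exact hallneg k (hc1 i k)
  obtain ⟨v, hre, hst2, hsat⟩ := (hst _).mp hdiv
  have hplus : TauPlus tr τ t (v 1) := TransGen.tail' hre (hst2 0)
  exact (hsat 1) ⟨v 1, hplus⟩ (fun j => hc2 ⟨v 1, hplus⟩ j)

lemma formEq_isDPBB : IsDPBB tr τ (FormEq tr τ) :=
  ⟨⟨fun _ _ hxy φ => (hxy φ).symm, formEq_condT⟩, formEq_condD⟩

end Aux

/-- modal characterisation of divergence-preserving branching
bisimilarity. -/
theorem dpbb_modal_characterisation {S Act : Type} (tr : S → Act → S → Prop) (τ : Act)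
    (s t : S) :
    DPBBisimilar tr τ s t ↔ (∀ φ : Formula Act, Sat tr τ s φ ↔ Sat tr τ t φ) := by
  constructor
  · intro h φ
    exact invariance φ s t h
  · intro h
    exact ⟨FormEq tr τ, formEq_isDPBB, h⟩
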